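/- Let n be a nonnegative integer and let a, c be complex numbers with (a)_n ≠ 0, (c)_n ≠ 0, (c−a−n)_{⌊n/2⌋} ≠ 0, and (1+a−c)_{⌊n/2⌋} ≠ 0. Then _3F_2(−n, a/2, (a+1)/2 ; a, c ; 4) = [(−1)^n (1+a−c)_n / (c)_n] · _3F_2(−n/2, (1−n)/2, 1−c−n ; c−a−n, 1+a−c ; 4), where the series on the right terminates because one of the numerator parameters −n/2 and (1−n)/2 is a nonpositive integer: it equals the finite sum Σ_{k=0}^{⌊n/2⌋} [(−n/2)_k ((1−n)/2)_k (1−c−n)_k / (k! (c−a−n)_k (1+a−c)_k)] 4^k. -/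
import Mathlib


open Finset

/-- The rising factorial (Pochhammer symbol) `(a)_k = a(a+1)⋯(a+k-1)`. -/
noncomputable def poch (a : ℂ) (k : ℕ) : ℂ := ∏ i ∈ Finset.range k, (a + i)



noncomputable def ffc (x : ℂ) (k : ℕ) : ℂ := ∏ i ∈ Finset.range k, (x - i)

lemma poch_zero (a : ℂ) : poch a 0 = 1 := by simp [poch]

lemma poch_succ (a : ℂ) (k : ℕ) : poch a (k+1) = poch a k * (a + k) := by
  simp [poch, Finset.prod_range_succ]

lemma ffc_zero (x : ℂ) : ffc x 0 = 1 := by simp [ffc]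

lemma ffc_succ (x : ℂ) (k : ℕ) : ffc x (k+1) = ffc x k * (x - k) := by
  simp [ffc, Finset.prod_range_succ]

lemma poch_add (a : ℂ) (p q : ℕ) : poch a (p+q) = poch a p * poch (a + p) q := by
  rw [poch, poch, poch, Finset.prod_range_add]
  congr 1
  refine Finset.prod_congr rfl fun i _ => ?_
  push_cast; ring

lemma poch_ne_zero_of_le {a : ℂ} {n k : ℕ} (h : k ≤ n) (ha : poch a n ≠ 0) :
    poch a k ≠ 0 := by
  have : poch a n = poch a k * poch (a + k) (n - k) := by
    rw [← poch_add]; congr 1; omega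
  intro h0
  apply ha; rw [this, h0, zero_mul]

lemma ffc_eq_poch (x : ℂ) (k : ℕ) : ffc x k = poch (x - k + 1) k := by
  rw [ffc, poch, ← Finset.prod_range_reflect]
  refine Finset.prod_congr rfl fun i hi => ?_
  simp only [Finset.mem_range] at hi
  have : ((k - 1 - i : ℕ) : ℂ) = (k : ℂ) - 1 - i := by
    have : k - 1 - i = k - (1 + i) := by omega
    rw [this]; push_cast [Nat.cast_sub (by omega : 1 + i ≤ k)]; ring
  rw [this]; ring

lemma poch_reverse (x : ℂ) (k : ℕ) : poch x k = (-1)^k * poch (-x - k + 1) k := by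
  have h1 : poch x k = (-1)^k * ffc (-x) k := by
    rw [poch, ffc, show ((-1:ℂ))^k = ∏ _i ∈ Finset.range k, (-1:ℂ) by simp, ← Finset.prod_mul_distrib]
    refine Finset.prod_congr rfl fun i _ => by ring
  rw [h1, ffc_eq_poch]
lemma poch_double (x : ℂ) (k : ℕ) :
    poch (2*x) (2*k) = poch x k * poch (x + 1/2) k * 4^k := by
  induction k with
  | zero => simp [poch_zero]
  | succ k ih =>
    have h2 : 2*(k+1) = 2*k + 1 + 1 := by ring
    rw [h2, poch_succ, poch_succ, poch_succ, poch_succ, ih]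
    push_cast
    ring

lemma poch_neg_nat {n k : ℕ} (h : k ≤ n) :
    poch (-(n:ℂ)) k = (-1)^k * (n.descFactorial k : ℂ) := by
  rw [poch, Nat.descFactorial_eq_prod_range, Nat.cast_prod,
    show ((-1:ℂ))^k = ∏ _i ∈ Finset.range k, (-1:ℂ) by simp, ← Finset.prod_mul_distrib]
  refine Finset.prod_congr rfl fun i hi => ?_
  simp only [Finset.mem_range] at hi
  rw [Nat.cast_sub (by omega : i ≤ n)]
  ring

lemma ffc_add (x y : ℂ) (k : ℕ) :
    ffc (x + y) k = ∑ i ∈ range (k+1), (k.choose i : ℂ) * ffc x i * ffc y (k-i) := by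
  induction k with
  | zero => simp [ffc_zero]
  | succ k ih =>
    rw [ffc_succ, ih, Finset.sum_mul]
    have hsplit : ∀ i ∈ range (k+1),
        (k.choose i : ℂ) * ffc x i * ffc y (k-i) * (x + y - k)
        = (k.choose i : ℂ) * ffc x (i+1) * ffc y (k-i)
          + (k.choose i : ℂ) * ffc x i * ffc y (k-i+1) := by
      intro i hi
      simp only [Finset.mem_range] at hi
      rw [ffc_succ, ffc_succ]
      have hki : ((k - i : ℕ) : ℂ) = (k : ℂ) - i := by
        rw [Nat.cast_sub (by omega)]
      rw [hki]
      ring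
    rw [Finset.sum_congr rfl hsplit, Finset.sum_add_distrib]
    -- target : ∑ i ∈ range (k+2), C(k+1,i) ffc x i ffc y (k+1-i)
    rw [Finset.sum_range_succ' (fun i => ((k+1).choose i : ℂ) * ffc x i * ffc y (k+1-i)) (k+1)]
    have h1 : ∑ i ∈ range (k+1), (((k+1).choose (i+1) : ℕ) : ℂ) * ffc x (i+1) * ffc y (k+1-(i+1))
        = ∑ i ∈ range (k+1), ((k.choose i : ℂ) * ffc x (i+1) * ffc y (k-i)
            + (k.choose (i+1) : ℂ) * ffc x (i+1) * ffc y (k-i)) := by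
      refine Finset.sum_congr rfl fun i hi => ?_
      rw [Nat.choose_succ_succ, Nat.cast_add]
      have : k+1-(i+1) = k-i := by omega
      rw [this]; ring
    rw [h1, Finset.sum_add_distrib]
    have h2 : ∑ i ∈ range (k+1), (k.choose i : ℂ) * ffc x i * ffc y (k-i+1)
        = ∑ i ∈ range (k+1), (k.choose (i+1) : ℂ) * ffc x (i+1) * ffc y (k-i)
          + (((k+1).choose 0 : ℕ) : ℂ) * ffc x 0 * ffc y (k+1-0) := by
      have := Finset.sum_range_succ' (fun i => (k.choose i : ℂ) * ffc x i * ffc y (k+1-i)) k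
      have e1 : ∑ i ∈ range (k+1), (k.choose i : ℂ) * ffc x i * ffc y (k-i+1)
          = ∑ i ∈ range (k+1), (k.choose i : ℂ) * ffc x i * ffc y (k+1-i) := by
        refine Finset.sum_congr rfl fun i hi => ?_
        simp only [Finset.mem_range] at hi
        congr 2; omega
      rw [e1, this]
      have e2 : ∑ i ∈ range k, (k.choose (i+1) : ℂ) * ffc x (i+1) * ffc y (k+1-(i+1))
          = ∑ i ∈ range (k+1), (k.choose (i+1) : ℂ) * ffc x (i+1) * ffc y (k-i) := by
        rw [Finset.sum_range_succ]
        simp only [Nat.choose_succ_self, Nat.cast_zero, zero_mul]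
        rw [add_zero]
        refine Finset.sum_congr rfl fun i hi => ?_
        congr 2; omega
      rw [e2]
      simp
    rw [h2]
    ring

lemma alt_sum_succ (N : ℕ) (f : ℕ → ℂ) :
    ∑ m ∈ range (N+2), (-1:ℂ)^m * ((N+1).choose m : ℂ) * f m
    = ∑ m ∈ range (N+1), (-1:ℂ)^m * (N.choose m : ℂ) * (f m - f (m+1)) := by
  have hL := Finset.sum_range_succ' (fun m => (-1:ℂ)^m * ((N+1).choose m : ℂ) * f m) (N+1)
  rw [hL]
  have h1 : ∑ m ∈ range (N+1), (-1:ℂ)^(m+1) * ((N+1).choose (m+1) : ℂ) * f (m+1)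
      = ∑ m ∈ range (N+1), (-((-1:ℂ)^m * (N.choose m : ℂ) * f (m+1))
          - (-1:ℂ)^m * (N.choose (m+1) : ℂ) * f (m+1)) := by
    refine Finset.sum_congr rfl fun m hm => ?_
    rw [Nat.choose_succ_succ, Nat.cast_add, pow_succ]
    ring
  rw [h1, Finset.sum_sub_distrib]
  have h2 : ∑ m ∈ range (N+1), (-1:ℂ)^m * (N.choose m : ℂ) * (f m - f (m+1))
      = ∑ m ∈ range (N+1), (-1:ℂ)^m * (N.choose m : ℂ) * f m
        - ∑ m ∈ range (N+1), (-1:ℂ)^m * (N.choose m : ℂ) * f (m+1) := by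
    rw [← Finset.sum_sub_distrib]
    refine Finset.sum_congr rfl fun m hm => by ring
  rw [h2]
  have h3 : ∑ m ∈ range (N+1), (-1:ℂ)^m * (N.choose m : ℂ) * f m
      = ∑ m ∈ range N, (-1:ℂ)^(m+1) * (N.choose (m+1) : ℂ) * f (m+1)
        + (-1:ℂ)^0 * (N.choose 0 : ℂ) * f 0 :=
    Finset.sum_range_succ' _ N
  have h4 : ∑ m ∈ range (N+1), (-1:ℂ)^m * (N.choose (m+1) : ℂ) * f (m+1)
      = ∑ m ∈ range N, (-1:ℂ)^m * (N.choose (m+1) : ℂ) * f (m+1) := by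
    rw [Finset.sum_range_succ, Nat.choose_succ_self]
    simp
  rw [h3, h4]
  have h5 : ∑ m ∈ range (N+1), -((-1:ℂ)^m * (N.choose m : ℂ) * f (m+1))
      = -∑ m ∈ range (N+1), (-1:ℂ)^m * (N.choose m : ℂ) * f (m+1) := by
    rw [Finset.sum_neg_distrib]
  rw [h5]
  have h6 : ∑ m ∈ range N, (-1:ℂ)^(m+1) * (N.choose (m+1) : ℂ) * f (m+1)
      = -∑ m ∈ range N, (-1:ℂ)^m * (N.choose (m+1) : ℂ) * f (m+1) := by
    rw [← Finset.sum_neg_distrib]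
    refine Finset.sum_congr rfl fun m hm => by rw [pow_succ]; ring
  rw [h6]
  simp
  ring

lemma ffc_sub (y : ℂ) (i : ℕ) : ffc (y+1) i - ffc y i = i * ffc y (i-1) := by
  cases i with
  | zero => simp [ffc_zero]
  | succ j =>
    have h1 : ffc (y+1) (j+1) = (y+1) * ffc y j := by
      rw [ffc, ffc, Finset.prod_range_succ' (fun t => y + 1 - t) j]
      simp only [Nat.cast_zero, sub_zero]
      rw [mul_comm]
      congr 1
      refine Finset.prod_congr rfl fun t _ => ?_
      push_cast; ring
    rw [h1, ffc_succ]
    have : (j+1 : ℕ) - 1 = j := rfl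
    rw [this]
    push_cast; ring

lemma diff_sum (i : ℕ) : ∀ (N : ℕ) (x : ℂ),
    ∑ m ∈ range (N+1), (-1:ℂ)^m * (N.choose m : ℂ) * ffc (x + m) i
    = (-1:ℂ)^N * (i.descFactorial N : ℂ) * ffc x (i - N) := by
  induction i with
  | zero =>
    intro N x
    simp only [ffc_zero, Nat.zero_sub, mul_one]
    cases N with
    | zero => simp
    | succ N =>
      have hZ := Int.alternating_sum_range_choose (n := N+1)
      rw [if_neg (Nat.succ_ne_zero N)] at hZ
      have : ((∑ i ∈ range (N+2), (-1:ℤ)^i * ((N+1).choose i : ℤ) : ℤ) : ℂ) = ((0:ℤ) : ℂ) := by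
        rw [hZ]
      push_cast at this
      rw [show N+1+1 = N+2 from rfl]
      rw [this]
      simp
  | succ i ih =>
    intro N x
    cases N with
    | zero => simp [ffc_zero]
    | succ N =>
      rw [alt_sum_succ N (fun m => ffc (x + m) (i+1))]
      have hstep : ∀ m ∈ range (N+1),
          (-1:ℂ)^m * (N.choose m : ℂ) * (ffc (x + m) (i+1) - ffc (x + (m+1 : ℕ)) (i+1))
          = -((i:ℂ)+1) * ((-1:ℂ)^m * (N.choose m : ℂ) * ffc (x + m) i) := by
        intro m hm
        have : ffc (x + (m+1 : ℕ)) (i+1) - ffc (x + m) (i+1)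
            = ((i:ℂ)+1) * ffc (x + m) ((i+1)-1) := by
          have := ffc_sub (x + m) (i+1)
          push_cast at this ⊢
          rw [← this]; ring_nf
        have h2 : (i+1 : ℕ) - 1 = i := rfl
        rw [h2] at this
        have : ffc (x + m) (i+1) - ffc (x + (m+1 : ℕ)) (i+1) = -(((i:ℂ)+1) * ffc (x + m) i) := by
          rw [← this]; ring
        rw [this]; ring
      rw [Finset.sum_congr rfl hstep, ← Finset.mul_sum, ih N x]
      rw [Nat.succ_descFactorial_succ]
      have : (i+1 : ℕ) - (N+1) = i - N := by omega
      rw [this]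
      push_cast
      ring

lemma choose_trinom {n i m : ℕ} (h : i + m ≤ n) :
    n.choose (i+m) * (i+m).choose i = n.choose i * (n-i).choose m := by
  apply Nat.eq_of_mul_eq_mul_right
    (show 0 < Nat.factorial i * Nat.factorial m * Nat.factorial (n-i-m) by positivity)
  have h1 := Nat.choose_mul_factorial_mul_factorial (show i ≤ i+m by omega)
  rw [show i+m-i = m by omega] at h1
  have h2 := Nat.choose_mul_factorial_mul_factorial h
  have h3 := Nat.choose_mul_factorial_mul_factorial (show m ≤ n-i by omega)
  have h4 := Nat.choose_mul_factorial_mul_factorial (show i ≤ n by omega)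
  calc n.choose (i+m) * (i+m).choose i * (Nat.factorial i * Nat.factorial m * Nat.factorial (n-i-m))
      = n.choose (i+m) * ((i+m).choose i * Nat.factorial i * Nat.factorial m)
          * Nat.factorial (n-i-m) := by ring
    _ = n.choose (i+m) * Nat.factorial (i+m) * Nat.factorial (n-(i+m)) := by
          rw [h1, show n-i-m = n-(i+m) by omega]
    _ = Nat.factorial n := h2
    _ = n.choose i * Nat.factorial i * Nat.factorial (n-i) := h4.symm
    _ = n.choose i * Nat.factorial i
          * ((n-i).choose m * Nat.factorial m * Nat.factorial (n-i-m)) := by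
          rw [show n-i-m = n-i-m from rfl]
          rw [show Nat.factorial (n-i-m) = Nat.factorial ((n-i)-m) by rw [Nat.sub_sub], h3]
    _ = n.choose i * (n-i).choose m
          * (Nat.factorial i * Nat.factorial m * Nat.factorial (n-i-m)) := by ring

lemma desc_eq_E (n j : ℕ) (h : 2*j ≤ n) :
    n.descFactorial (2*j) = n.choose (n-j) * ((n-j).descFactorial j) * Nat.factorial j := by
  apply Nat.eq_of_mul_eq_mul_right (show 0 < Nat.factorial (n-2*j) by positivity)
  have h1 := Nat.factorial_mul_descFactorial (show 2*j ≤ n from h)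
  have h2 := Nat.factorial_mul_descFactorial (show j ≤ n-j by omega)
  rw [show (n-j)-j = n-2*j by omega] at h2
  have h3 := Nat.choose_mul_factorial_mul_factorial (show n-j ≤ n by omega)
  rw [show n-(n-j) = j by omega] at h3
  calc n.descFactorial (2*j) * Nat.factorial (n-2*j)
      = Nat.factorial (n-2*j) * n.descFactorial (2*j) := by ring
    _ = Nat.factorial n := h1
    _ = n.choose (n-j) * Nat.factorial (n-j) * Nat.factorial j := h3.symm
    _ = n.choose (n-j) * (Nat.factorial (n-2*j) * (n-j).descFactorial j)
          * Nat.factorial j := by rw [h2]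
    _ = n.choose (n-j) * (n-j).descFactorial j * Nat.factorial j
          * Nat.factorial (n-2*j) := by ring

lemma keyP (n : ℕ) (a c : ℂ) :
    ∑ k ∈ range (n+1), (-1:ℂ)^k * (n.choose k : ℂ) * poch (a + k) k * poch (c + k) (n - k)
    = (-1:ℂ)^n * ∑ j ∈ range (n/2 + 1),
        (n.choose (n-j) : ℂ) * ((n-j).descFactorial j : ℂ)
          * poch (c + n - j) j * poch (1 + a - c + j) (n - 2*j) := by
  -- Step 1 : expand each term by Vandermonde
  have step1 : ∀ k ∈ range (n+1),
      (-1:ℂ)^k * (n.choose k : ℂ) * poch (a + k) k * poch (c + k) (n - k)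
      = ∑ i ∈ range (n+1), (-1:ℂ)^k * (n.choose k : ℂ) * (k.choose i : ℂ)
          * ffc (a - c + k) i * poch (c + i) (n - i) := by
    intro k hk
    simp only [Finset.mem_range] at hk
    have hk' : k ≤ n := by omega
    have e1 : poch (a + k) k = ffc ((a - c + k) + (c + k - 1)) k := by
      rw [ffc_eq_poch]; congr 1; ring
    rw [e1, ffc_add, Finset.mul_sum, Finset.sum_mul]
    rw [← Finset.sum_subset (Finset.range_subset_range.mpr (by omega : k+1 ≤ n+1))
      (fun i _ hi => by
        simp only [Finset.mem_range, not_lt] at hi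
        rw [Nat.choose_eq_zero_of_lt (by omega : k < i)]
        simp)]
    refine Finset.sum_congr rfl fun i hi => ?_
    simp only [Finset.mem_range] at hi
    have hik : i ≤ k := by omega
    have e2 : ffc (c + k - 1) (k - i) = poch (c + i) (k - i) := by
      rw [ffc_eq_poch]; congr 1
      rw [Nat.cast_sub hik]; ring
    have e3 : poch (c + i) (k - i) * poch (c + k) (n - k) = poch (c + i) (n - i) := by
      rw [show n - i = (k-i) + (n-k) by omega, poch_add]
      congr 2
      rw [Nat.cast_sub hik]; ring
    rw [e2]
    calc (-1:ℂ)^k * (n.choose k : ℂ) * ((k.choose i : ℂ) * ffc (a - c + k) i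
            * poch (c+i) (k-i)) * poch (c+k) (n-k)
        = (-1:ℂ)^k * (n.choose k : ℂ) * (k.choose i : ℂ) * ffc (a - c + k) i
            * (poch (c+i) (k-i) * poch (c+k) (n-k)) := by ring
      _ = _ := by rw [e3]
  rw [Finset.sum_congr rfl step1, Finset.sum_comm]
  -- Step 2 : inner sum over k, reindexed
  have step2 : ∀ i ∈ range (n+1),
      ∑ k ∈ range (n+1), (-1:ℂ)^k * (n.choose k : ℂ) * (k.choose i : ℂ)
          * ffc (a - c + k) i * poch (c + i) (n - i)
      = (-1:ℂ)^n * (n.choose i : ℂ) * (i.descFactorial (n-i) : ℂ)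
          * poch (c + i) (n - i) * ffc (a - c + i) (i - (n-i)) := by
    intro i hi
    simp only [Finset.mem_range] at hi
    have hi' : i ≤ n := by omega
    rw [← Finset.sum_subset (show Finset.Ico i (n+1) ⊆ range (n+1) by
        rw [Finset.range_eq_Ico]; exact Finset.Ico_subset_Ico (by omega) le_rfl)
      (fun k hk hk2 => by
        simp only [Finset.mem_range] at hk
        have hki : k < i := by
          by_contra h'
          push_neg at h'
          exact hk2 (Finset.mem_Ico.mpr ⟨h', hk⟩)
        rw [Nat.choose_eq_zero_of_lt hki]
        simp)]
    rw [Finset.sum_Ico_eq_sum_range]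
    have hlen : n + 1 - i = (n - i) + 1 := by omega
    rw [hlen]
    have e4 : ∀ m ∈ range ((n-i)+1),
        (-1:ℂ)^(i+m) * (n.choose (i+m) : ℂ) * ((i+m).choose i : ℂ)
          * ffc (a - c + (i+m : ℕ)) i * poch (c + i) (n - i)
        = ((-1:ℂ)^i * (n.choose i : ℂ) * poch (c + i) (n - i)) *
            ((-1:ℂ)^m * ((n-i).choose m : ℂ) * ffc ((a - c + i) + m) i) := by
      intro m hm
      simp only [Finset.mem_range] at hm
      have htr : (n.choose (i+m) : ℂ) * ((i+m).choose i : ℂ)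
          = (n.choose i : ℂ) * ((n-i).choose m : ℂ) := by
        rw [← Nat.cast_mul, ← Nat.cast_mul, choose_trinom (by omega)]
      have hcast : ((i+m : ℕ) : ℂ) = (i : ℂ) + m := by push_cast; ring
      rw [hcast, pow_add]
      calc (-1:ℂ)^i * (-1:ℂ)^m * (n.choose (i+m) : ℂ) * ((i+m).choose i : ℂ)
            * ffc (a - c + ((i:ℂ) + m)) i * poch (c + i) (n - i)
          = ((n.choose (i+m) : ℂ) * ((i+m).choose i : ℂ)) * ((-1:ℂ)^i * (-1:ℂ)^m
            * ffc ((a - c + i) + m) i * poch (c + i) (n - i)) := by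
              rw [show a - c + ((i:ℂ) + m) = (a - c + i) + m by ring]; ring
        _ = _ := by rw [htr]; ring
    rw [Finset.sum_congr rfl e4, ← Finset.mul_sum, diff_sum i (n-i) (a - c + i)]
    have : (-1:ℂ)^i * (-1:ℂ)^(n-i) = (-1:ℂ)^n := by
      rw [← pow_add, show i + (n-i) = n by omega]
    calc ((-1:ℂ)^i * (n.choose i : ℂ) * poch (c + i) (n - i)) *
          ((-1:ℂ)^(n-i) * (i.descFactorial (n-i) : ℂ) * ffc (a - c + i) (i - (n-i)))
        = ((-1:ℂ)^i * (-1:ℂ)^(n-i)) * (n.choose i : ℂ) * (i.descFactorial (n-i) : ℂ)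
            * poch (c + i) (n - i) * ffc (a - c + i) (i - (n-i)) := by ring
      _ = _ := by rw [this]
  rw [Finset.sum_congr rfl step2]
  -- Step 3 : reflect the sum and truncate
  rw [← Finset.sum_range_reflect]
  simp only [Nat.add_sub_cancel]
  rw [Finset.mul_sum]
  rw [← Finset.sum_subset (Finset.range_subset_range.mpr (by omega : n/2+1 ≤ n+1))
    (fun j hj hj2 => by
      simp only [Finset.mem_range, not_lt] at hj hj2
      rw [show n - (n-j) = j by omega,
        Nat.descFactorial_eq_zero_iff_lt.mpr (show n-j < j by omega)]
      simp)]
  refine Finset.sum_congr rfl fun j hj => ?_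
  simp only [Finset.mem_range] at hj
  have hj2 : 2*j ≤ n := by omega
  rw [show n - (n-j) = j by omega, show (n-j) - j = n - 2*j by omega]
  have hc1 : ((n-j : ℕ) : ℂ) = (n : ℂ) - j := by rw [Nat.cast_sub (by omega)]
  have hc2 : ffc (a - c + ((n:ℂ) - j)) (n - 2*j) = poch (1 + a - c + j) (n - 2*j) := by
    rw [ffc_eq_poch]
    congr 1
    rw [Nat.cast_sub hj2]
    push_cast
    ring
  rw [hc1, hc2, show c + ((n:ℂ) - j) = c + (n:ℂ) - j by ring]
  ring

theorem stmt_10 (n : ℕ) (a c : ℂ)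
    (ha : poch a n ≠ 0) (hc : poch c n ≠ 0)
    (hca : poch (c - a - (n : ℂ)) (n / 2) ≠ 0) (hac : poch (1 + a - c) (n / 2) ≠ 0) :
    ∑ k ∈ range (n + 1),
      (poch (-(n : ℂ)) k * poch (a / 2) k * poch ((a + 1) / 2) k) /
        ((Nat.factorial k : ℂ) * poch a k * poch c k) * (4 : ℂ) ^ k
    = (-1 : ℂ) ^ n * poch (1 + a - c) n / poch c n *
      ∑ k ∈ range (n / 2 + 1),
        (poch (-(n : ℂ) / 2) k * poch ((1 - (n : ℂ)) / 2) k * poch (1 - c - (n : ℂ)) k) /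
          ((Nat.factorial k : ℂ) * poch (c - a - (n : ℂ)) k * poch (1 + a - c) k) *
          (4 : ℂ) ^ k := by

  have hL : ∑ k ∈ range (n + 1),
      (poch (-(n : ℂ)) k * poch (a / 2) k * poch ((a + 1) / 2) k) /
        ((Nat.factorial k : ℂ) * poch a k * poch c k) * (4 : ℂ) ^ k
      = (∑ k ∈ range (n+1),
          (-1:ℂ)^k * (n.choose k : ℂ) * poch (a + k) k * poch (c + k) (n - k)) / poch c n := by
    rw [Finset.sum_div]
    refine Finset.sum_congr rfl fun k hk => ?_
    simp only [Finset.mem_range] at hk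
    have hk' : k ≤ n := by omega
    have hak : poch a k ≠ 0 := poch_ne_zero_of_le hk' ha
    have hck : poch c k ≠ 0 := poch_ne_zero_of_le hk' hc
    have hfk : (Nat.factorial k : ℂ) ≠ 0 := by
      exact_mod_cast (Nat.factorial_pos k).ne'
    have e12 : poch (a/2) k * poch ((a+1)/2) k * 4^k = poch a k * poch (a + k) k := by
      have h1 := poch_double (a/2) k
      rw [show 2*(a/2) = a by ring, show a/2 + 1/2 = (a+1)/2 by ring] at h1
      rw [← h1, show 2*k = k + k by ring, poch_add]
    have e3 : poch (-(n:ℂ)) k = (-1:ℂ)^k * (Nat.factorial k : ℂ) * (n.choose k : ℂ) := by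
      rw [poch_neg_nat hk', Nat.descFactorial_eq_factorial_mul_choose]
      push_cast; ring
    have e4 : poch c n = poch c k * poch (c + k) (n - k) := by
      rw [← poch_add]; congr 1; omega
    rw [div_mul_eq_mul_div, div_eq_div_iff (by
        exact mul_ne_zero (mul_ne_zero hfk hak) hck) hc, e3, e4]
    linear_combination ((-1:ℂ)^k * (Nat.factorial k : ℂ) * (n.choose k : ℂ)
      * poch c k * poch (c + k) (n - k)) * e12
  have hR : (-1 : ℂ) ^ n * poch (1 + a - c) n / poch c n *
      ∑ k ∈ range (n / 2 + 1),
        (poch (-(n : ℂ) / 2) k * poch ((1 - (n : ℂ)) / 2) k * poch (1 - c - (n : ℂ)) k) /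
          ((Nat.factorial k : ℂ) * poch (c - a - (n : ℂ)) k * poch (1 + a - c) k) *
          (4 : ℂ) ^ k
      = ((-1:ℂ)^n * ∑ j ∈ range (n/2 + 1),
          (n.choose (n-j) : ℂ) * ((n-j).descFactorial j : ℂ)
            * poch (c + n - j) j * poch (1 + a - c + j) (n - 2*j)) / poch c n := by
    rw [Finset.mul_sum, Finset.mul_sum, Finset.sum_div]
    refine Finset.sum_congr rfl fun j hj => ?_
    simp only [Finset.mem_range] at hj
    have hj' : j ≤ n/2 := by omega
    have hj2 : 2*j ≤ n := by omega
    have hcaj : poch (c - a - (n:ℂ)) j ≠ 0 := poch_ne_zero_of_le hj' hca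
    have hacj : poch (1 + a - c) j ≠ 0 := poch_ne_zero_of_le hj' hac
    have hfj : (Nat.factorial j : ℂ) ≠ 0 := by
      exact_mod_cast (Nat.factorial_pos j).ne'
    have f1 : poch (-(n:ℂ)/2) j * poch ((1-(n:ℂ))/2) j * 4^j = poch (-(n:ℂ)) (2*j) := by
      have h1 := poch_double (-(n:ℂ)/2) j
      rw [show 2*(-(n:ℂ)/2) = -(n:ℂ) by ring,
        show -(n:ℂ)/2 + 1/2 = (1-(n:ℂ))/2 by ring] at h1
      rw [h1]
    have f2 : poch (-(n:ℂ)) (2*j) = (n.descFactorial (2*j) : ℂ) := by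
      rw [poch_neg_nat hj2, pow_mul]
      norm_num
    have f3 : poch (1 - c - (n:ℂ)) j = (-1:ℂ)^j * poch (c + n - j) j := by
      rw [poch_reverse (1 - c - (n:ℂ)) j,
        show -(1 - c - (n:ℂ)) - j + 1 = c + (n:ℂ) - j by ring]
    have h5 : poch (1 + a - c + j + ((n - 2*j : ℕ) : ℂ)) j
        = (-1:ℂ)^j * poch (c - a - (n:ℂ)) j := by
      rw [poch_reverse (1 + a - c + j + ((n - 2*j : ℕ) : ℂ)) j]
      congr 2
      rw [Nat.cast_sub hj2]
      push_cast; ring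
    have f4 : poch (1 + a - c) n
        = poch (1 + a - c) j * poch (1 + a - c + j) (n - 2*j)
          * ((-1:ℂ)^j * poch (c - a - (n:ℂ)) j) := by
      calc poch (1 + a - c) n = poch (1 + a - c) (j + ((n - 2*j) + j)) := by
            rw [show j + ((n - 2*j) + j) = n by omega]
        _ = poch (1 + a - c) j * (poch (1 + a - c + j) (n - 2*j)
              * poch (1 + a - c + j + ((n - 2*j : ℕ) : ℂ)) j) := by
            rw [poch_add, poch_add]
        _ = _ := by rw [h5]; ring
    have f15 : poch (-(n:ℂ)/2) j * poch ((1-(n:ℂ))/2) j * 4^j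
        = (n.choose (n-j) : ℂ) * ((n-j).descFactorial j : ℂ) * (Nat.factorial j : ℂ) := by
      rw [f1, f2, desc_eq_E n j hj2]
      push_cast; ring
    have hD : (Nat.factorial j : ℂ) * poch (c - a - (n:ℂ)) j * poch (1 + a - c) j ≠ 0 :=
      mul_ne_zero (mul_ne_zero hfj hcaj) hacj
    have comb : (-1:ℂ)^n * poch (1 + a - c) n / poch c n *
        ((poch (-(n:ℂ)/2) j * poch ((1-(n:ℂ))/2) j * poch (1 - c - (n:ℂ)) j) /
          ((Nat.factorial j : ℂ) * poch (c - a - (n:ℂ)) j * poch (1 + a - c) j) * 4^j)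
        = ((-1:ℂ)^n * poch (1 + a - c) n *
            (poch (-(n:ℂ)/2) j * poch ((1-(n:ℂ))/2) j * poch (1 - c - (n:ℂ)) j * 4^j)) /
          (poch c n * ((Nat.factorial j : ℂ) * poch (c - a - (n:ℂ)) j * poch (1 + a - c) j)) := by
      rw [div_mul_eq_mul_div (poch (-(n:ℂ)/2) j * poch ((1-(n:ℂ))/2) j * poch (1 - c - (n:ℂ)) j)
        ((Nat.factorial j : ℂ) * poch (c - a - (n:ℂ)) j * poch (1 + a - c) j) ((4:ℂ)^j),
        div_mul_div_comm]
    rw [comb, div_eq_div_iff (mul_ne_zero hc hD) hc, f4, f3]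
    have h2 : ((-1:ℂ))^(j*2) = 1 := by
      rw [pow_mul']; norm_num
    linear_combination ((-1:ℂ)^n * poch (1 + a - c) j * poch (1 + a - c + j) (n - 2*j)
        * poch (c - a - (n:ℂ)) j * poch (c + (n:ℂ) - j) j * poch c n) * f15
      + (poch (1 + a - c) j * poch (1 + a - c + (j:ℂ)) (n - 2*j) * poch (c - a - (n:ℂ)) j
        * poch (-(n:ℂ)/2) j * poch ((1-(n:ℂ))/2) j * poch (c + (n:ℂ) - j) j * poch c n
        * (-1:ℂ)^n * 4^j) * h2
  rw [hL, hR, keyP]
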